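/- Let ∅ ≠ A ⊆ R̃^d be internal and sharply bounded, and let (A_ε)_ε be any sharply bounded representative of A. Then E_M(A) equals the set of nets (u_ε)_ε of smooth functions ℝ^d → ℂ such that for every multi-index α there exists N ∈ ℕ with sup_{x ∈ A_ε + ε^N} |∂^α u_ε(x)| ≤ ε^{-N} for all sufficiently small ε (where A + r denotes {x ∈ ℝ^d : d(x,A) ≤ r}). -/

import Mathlib

open Real Set Metric MeasureTheory Filter

noncomputable section

/-- `P ε` holds for all sufficiently small `ε ∈ (0,1)`. -/
def EvSmall (P : ℝ → Prop) : Prop :=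
  ∃ ε₀ : ℝ, 0 < ε₀ ∧ ε₀ < 1 ∧ ∀ ε : ℝ, 0 < ε → ε ≤ ε₀ → P ε

/-- A net `(u_ε)` with values in a seminormed group is moderate. -/
def Moderate {E : Type*} [SeminormedAddGroup E] (u : ℝ → E) : Prop :=
  ∃ N : ℕ, EvSmall fun ε => ‖u ε‖ ≤ ε ^ (-(N : ℝ))

/-- A net `(u_ε)` is negligible. -/
def Negligible {E : Type*} [SeminormedAddGroup E] (u : ℝ → E) : Prop :=
  ∀ m : ℕ, EvSmall fun ε => ‖u ε‖ ≤ ε ^ (m : ℝ)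

/-- Two nets represent the same generalized point. -/
def EqvNet {E : Type*} [SeminormedAddGroup E] (x y : ℝ → E) : Prop :=
  Negligible fun ε => x ε - y ε

/-- The set of generalized points of `Ẽ` (modelled as the moderate nets). -/
def GenPt (E : Type*) [SeminormedAddGroup E] : Set (ℝ → E) := {x | Moderate x}

/-- `x` is a representative of some generalized point belonging to `A`. -/
def IsReprOfPointOf {E : Type*} [SeminormedAddGroup E] (A : Set (ℝ → E)) (x : ℝ → E) : Prop :=
  Moderate x ∧ ∃ a ∈ A, EqvNet x a

/-- The sharp norm `e^{-v(x)}` of a (moderate) net. -/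
noncomputable def sharpNorm {E : Type*} [SeminormedAddGroup E] (x : ℝ → E) : ℝ :=
  sInf {r : ℝ | ∃ b : ℝ, r = Real.exp (-b) ∧ EvSmall fun ε => ‖x ε‖ ≤ ε ^ b}

/-- `A` is open for the sharp topology (as a set of generalized points). -/
def SharpOpen {E : Type*} [SeminormedAddGroup E] (A : Set (ℝ → E)) : Prop :=
  (∀ x ∈ A, Moderate x) ∧
  ∀ x ∈ A, ∃ r > 0, ∀ y : ℝ → E, Moderate y →
    sharpNorm (fun ε => y ε - x ε) < r → y ∈ A

/-- `B` is a sharp neighbourhood of `A`. -/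
def IsSharpNbhdOf {E : Type*} [SeminormedAddGroup E] (B A : Set (ℝ → E)) : Prop :=
  A ⊆ B ∧ ∀ x ∈ A, ∃ r > 0, ∀ y : ℝ → E, Moderate y →
    sharpNorm (fun ε => y ε - x ε) < r → y ∈ B

/-- The internal set with representative `(Aε)`. -/
def InternalSet {E : Type*} [SeminormedAddGroup E] (Aε : ℝ → Set E) : Set (ℝ → E) :=
  {x | Moderate x ∧ ∃ y : ℝ → E, EqvNet x y ∧ EvSmall fun ε => y ε ∈ Aε ε}

/-- `(Aε)` is a sharply bounded representative. -/
def SharplyBddRep {E : Type*} [SeminormedAddGroup E] (Aε : ℝ → Set E) : Prop :=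
  ∃ M : ℕ, EvSmall fun ε => ∀ x ∈ Aε ε, ‖x‖ ≤ ε ^ (-(M : ℝ))

/-- A set of generalized points is sharply bounded. -/
def SharplyBddSet {E : Type*} [SeminormedAddGroup E] (A : Set (ℝ → E)) : Prop :=
  ∃ C : ℝ, ∀ x ∈ A, sharpNorm x ≤ C

/-- The interleaved closure of a set of generalized points. -/
def interleaved {E : Type*} [SeminormedAddGroup E] (A : Set (ℝ → E)) : Set (ℝ → E) :=
  {x | ∃ (m : ℕ) (S : Fin m → Set ℝ) (y : Fin m → ℝ → E),
    (∀ ε ∈ Set.Ioo (0:ℝ) 1, ∃! j, ε ∈ S j) ∧ (∀ j, y j ∈ A) ∧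
    ∀ ε ∈ Set.Ioo (0:ℝ) 1, ∀ j, ε ∈ S j → x ε = y j ε}

/-- A net of smooth functions (smooth for each ε ∈ (0,1)). -/
def SmoothNet {V : Type*} [NormedAddCommGroup V] [NormedSpace ℝ V] (u : ℝ → V → ℂ) : Prop :=
  ∀ ε : ℝ, 0 < ε → ε < 1 → ContDiff ℝ (⊤ : ℕ∞) (u ε)

/-- The nets belonging to `E_M(A)` : all derivatives are moderate along the points of `A`. -/
def EMod {V : Type*} [NormedAddCommGroup V] [NormedSpace ℝ V]
    (A : Set (ℝ → V)) (u : ℝ → V → ℂ) : Prop :=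
  SmoothNet u ∧ ∀ (n : ℕ) (x : ℝ → V), IsReprOfPointOf A x →
    Moderate fun ε => iteratedFDeriv ℝ n (u ε) (x ε)

/-- The nets belonging to `N(A)` : all derivatives are negligible along the points of `A`. -/
def NNeg {V : Type*} [NormedAddCommGroup V] [NormedSpace ℝ V]
    (A : Set (ℝ → V)) (u : ℝ → V → ℂ) : Prop :=
  SmoothNet u ∧ ∀ (n : ℕ) (x : ℝ → V), IsReprOfPointOf A x →
    Negligible fun ε => iteratedFDeriv ℝ n (u ε) (x ε)

/-- `u` and `v` define the same element of `G̃(A)`. -/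
def GEq {V : Type*} [NormedAddCommGroup V] [NormedSpace ℝ V]
    (A : Set (ℝ → V)) (u v : ℝ → V → ℂ) : Prop :=
  NNeg A fun ε z => u ε z - v ε z

/-- `x̃ ≤ ỹ` in `R̃` (for the given representatives). -/
def RleNet (x y : ℝ → ℝ) : Prop := ∀ m : ℕ, EvSmall fun ε => x ε ≤ y ε + ε ^ (m : ℝ)

/-- `x̃ ≫ 0` in `R̃`. -/
def StrPosNet (x : ℝ → ℝ) : Prop := ∃ m : ℕ, EvSmall fun ε => ε ^ (m : ℝ) ≤ x ε

/-- `x̃ ≪ ỹ` in `R̃`. -/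
def RltlNet (x y : ℝ → ℝ) : Prop := StrPosNet fun ε => y ε - x ε

/-- The operator `∂̄ = ½(∂ₓ + i ∂_y)` on smooth functions `ℂ → ℂ`. -/
def dbar (u : ℂ → ℂ) (z : ℂ) : ℂ :=
  (fderiv ℝ u z 1 + Complex.I * fderiv ℝ u z Complex.I) / 2

/-- The iterated derivative `D^k u = ∂ₓ^k u`. -/
def Dpow : ℕ → (ℂ → ℂ) → ℂ → ℂ
  | 0, u => u
  | (k+1), u => Dpow k fun z => fderiv ℝ u z 1

/-- `u ∈ G̃_H(A)` : generalized holomorphic functions on `A ⊆ C̃`. -/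
def GHol (A : Set (ℝ → ℂ)) (u : ℝ → ℂ → ℂ) : Prop :=
  EMod A u ∧ NNeg A fun ε => dbar (u ε)

/-- A continuous, piecewise `C¹` function on `[0,1]` (with its partition). -/
structure PwC1Path where
  toFun : ℝ → ℂ
  n : ℕ
  pt : Fin (n + 1) → ℝ
  mono : Monotone pt
  first : pt 0 = 0
  last : pt (Fin.last n) = 1
  cont : ContinuousOn toFun (Set.Icc 0 1)
  piece : ∀ i : Fin n, ContDiffOn ℝ 1 toFun (Set.Icc (pt i.castSucc) (pt i.succ))

/-- A net of piecewise `C¹` paths which is moderate for the `C¹_pw` norm. -/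
def PathModerate (γ : ℝ → PwC1Path) : Prop :=
  (∃ N : ℕ, EvSmall fun ε => ∀ t ∈ Set.Icc (0:ℝ) 1, ‖(γ ε).toFun t‖ ≤ ε ^ (-(N:ℝ))) ∧
  (∃ N : ℕ, EvSmall fun ε => ∀ᵐ t ∂(volume.restrict (Set.Icc (0:ℝ) 1)),
      ‖deriv (γ ε).toFun t‖ ≤ ε ^ (-(N:ℝ)))

/-- Two nets of paths represent the same generalized path
(their difference is negligible for the `C¹_pw` norm). -/
def PathEqv (γ γ' : ℝ → PwC1Path) : Prop :=
  ∀ m : ℕ, EvSmall fun ε =>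
    (∀ t ∈ Set.Icc (0:ℝ) 1, ‖(γ ε).toFun t - (γ' ε).toFun t‖ ≤ ε ^ (m:ℝ)) ∧
    (∀ᵐ t ∂(volume.restrict (Set.Icc (0:ℝ) 1)),
      ‖deriv (γ ε).toFun t - deriv (γ' ε).toFun t‖ ≤ ε ^ (m:ℝ))

/-- `γ` is a (generalized) path in `A ⊆ C̃`. -/
def PathIn (A : Set (ℝ → ℂ)) (γ : ℝ → PwC1Path) : Prop :=
  PathModerate γ ∧ ∀ t : ℝ → ℝ, (∀ ε, t ε ∈ Set.Icc (0:ℝ) 1) →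
    IsReprOfPointOf A fun ε => (γ ε).toFun (t ε)

/-- The complex path integral `∫_γ u(z) dz` along a piecewise `C¹` path. -/
noncomputable def pathIntegral (γ : PwC1Path) (u : ℂ → ℂ) : ℂ :=
  ∑ i : Fin γ.n, ∫ t in (γ.pt i.castSucc)..(γ.pt i.succ),
    u (γ.toFun t) * derivWithin γ.toFun (Set.Icc (γ.pt i.castSucc) (γ.pt i.succ)) t

/-- The path is closed: `γ(0) = γ(1)` as generalized points. -/
def ClosedPath (γ : ℝ → PwC1Path) : Prop :=
  Negligible fun ε => (γ ε).toFun 1 - (γ ε).toFun 0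

/-- A continuous, piecewise `C¹` function on `[0,1]²` (with its grid partition). -/
structure PwC1Homotopy where
  toFun : ℝ × ℝ → ℂ
  n : ℕ
  pt : Fin (n + 1) → ℝ
  mono : Monotone pt
  first : pt 0 = 0
  last : pt (Fin.last n) = 1
  cont : ContinuousOn toFun (Set.Icc 0 1 ×ˢ Set.Icc 0 1)
  piece : ∀ i j : Fin n, ContDiffOn ℝ 1 toFun
    (Set.Icc (pt i.castSucc) (pt i.succ) ×ˢ Set.Icc (pt j.castSucc) (pt j.succ))

/-- A moderate net of piecewise `C¹` functions on the square. -/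
def HomotopyModerate (H : ℝ → PwC1Homotopy) : Prop :=
  (∃ N : ℕ, EvSmall fun ε => ∀ p ∈ (Set.Icc (0:ℝ) 1 ×ˢ Set.Icc (0:ℝ) 1),
      ‖(H ε).toFun p‖ ≤ ε ^ (-(N:ℝ))) ∧
  (∃ N : ℕ, EvSmall fun ε =>
      ∀ᵐ p ∂(volume.restrict ((Set.Icc (0:ℝ) 1 ×ˢ Set.Icc (0:ℝ) 1) : Set (ℝ × ℝ))),
      ‖fderiv ℝ (H ε).toFun p‖ ≤ ε ^ (-(N:ℝ)))

/-- `H` is a homotopy in `A` between the closed paths `γ` and `γ'`. -/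
def IsHomotopyBetween (A : Set (ℝ → ℂ)) (γ γ' : ℝ → PwC1Path)
    (H : ℝ → PwC1Homotopy) : Prop :=
  HomotopyModerate H ∧
  (∀ t : ℝ → ℝ, (∀ ε, t ε ∈ Set.Icc (0:ℝ) 1) →
    (Negligible fun ε => (H ε).toFun (t ε, 0) - (γ ε).toFun (t ε)) ∧
    (Negligible fun ε => (H ε).toFun (t ε, 1) - (γ' ε).toFun (t ε))) ∧
  (∀ s : ℝ → ℝ, (∀ ε, s ε ∈ Set.Icc (0:ℝ) 1) →
    Negligible fun ε => (H ε).toFun (0, s ε) - (H ε).toFun (1, s ε)) ∧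
  (∀ t s : ℝ → ℝ, (∀ ε, t ε ∈ Set.Icc (0:ℝ) 1) → (∀ ε, s ε ∈ Set.Icc (0:ℝ) 1) →
    IsReprOfPointOf A fun ε => (H ε).toFun (t ε, s ε))


private lemma evsmall_and' {P Q : ℝ → Prop} (hP : EvSmall P) (hQ : EvSmall Q) :
    EvSmall fun ε => P ε ∧ Q ε := by
  obtain ⟨a, ha0, ha1, hPa⟩ := hP
  obtain ⟨b, hb0, hb1, hQb⟩ := hQ
  exact ⟨min a b, lt_min ha0 hb0, (min_le_left _ _).trans_lt ha1,
    fun ε h1 h2 => ⟨hPa ε h1 (h2.trans (min_le_left _ _)), hQb ε h1 (h2.trans (min_le_right _ _))⟩⟩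

private lemma evsmall_mono' {P Q : ℝ → Prop} (h : EvSmall P)
    (himp : ∀ ε, 0 < ε → ε < 1 → P ε → Q ε) : EvSmall Q := by
  obtain ⟨a, ha0, ha1, hp⟩ := h
  exact ⟨a, ha0, ha1, fun ε h1 h2 => himp ε h1 (lt_of_le_of_lt h2 ha1) (hp ε h1 h2)⟩

private lemma evsmall_le' {c : ℝ} (hc : 0 < c) : EvSmall fun ε => ε ≤ c :=
  ⟨min c (1/2), lt_min hc (by norm_num),
    lt_of_le_of_lt (min_le_right _ _) (by norm_num),
    fun ε _ h2 => h2.trans (min_le_left _ _)⟩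

private lemma not_evSmall' {P : ℝ → Prop} (h : ¬ EvSmall P) {ε₀ : ℝ}
    (h1 : 0 < ε₀) (h2 : ε₀ < 1) : ∃ ε, 0 < ε ∧ ε ≤ ε₀ ∧ ¬ P ε := by
  by_contra hc
  push_neg at hc
  exact h ⟨ε₀, h1, h2, hc⟩

private lemma pow_inv_succ' {ε : ℝ} (h0 : 0 < ε) (hh : ε ≤ 1/2) (M : ℕ) :
    1 + (ε ^ M)⁻¹ ≤ (ε ^ (M + 1))⁻¹ := by
  have hpm : (0:ℝ) < ε ^ M := pow_pos h0 M
  have hpm1 : ε ^ M ≤ 1 := pow_le_one₀ h0.le (by linarith)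
  have h1t : 1 ≤ (ε ^ M)⁻¹ := one_le_inv_iff₀.mpr ⟨hpm, hpm1⟩
  have h2 : (2:ℝ) ≤ ε⁻¹ := by
    have : (2:ℝ) ≤ 1/ε := by rw [le_div_iff₀ h0]; linarith
    simpa [one_div] using this
  rw [pow_succ, mul_inv]
  have := mul_le_mul_of_nonneg_left h2 (le_of_lt (inv_pos.mpr hpm))
  linarith


/-- Corollary 3.5: description of `E_M(A)` for an internal sharply bounded set. -/
theorem EMod_internal_sharplyBounded (d : ℕ)
    (A : Set (ℝ → EuclideanSpace ℝ (Fin d)))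
    (Aε : ℝ → Set (EuclideanSpace ℝ (Fin d)))
    (hA : A = InternalSet Aε) (hne : A.Nonempty)
    (hbdA : SharplyBddSet A) (hbd : SharplyBddRep Aε)
    (u : ℝ → EuclideanSpace ℝ (Fin d) → ℂ) (hsm : SmoothNet u) :
    EMod A u ↔ ∀ n : ℕ, ∃ N : ℕ, EvSmall fun ε =>
      ∀ x ∈ Metric.cthickening (ε ^ (N : ℝ)) (Aε ε),
        ‖iteratedFDeriv ℝ n (u ε) x‖ ≤ ε ^ (-(N : ℝ)) := by
  classical
  constructor
  · rintro ⟨-, hmod⟩ n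
    by_contra hcon
    push_neg at hcon
    -- extract a bad point for every order k, at scales ≤ 1/(k+2)
    have key : ∀ k : ℕ, ∃ ε : ℝ, 0 < ε ∧ ε ≤ 1/((k:ℝ)+2) ∧
        ∃ x, x ∈ Metric.cthickening (ε ^ (k:ℝ)) (Aε ε) ∧
          ε ^ (-(k:ℝ)) < ‖iteratedFDeriv ℝ n (u ε) x‖ := by
      intro k
      have hk0 : (0:ℝ) ≤ (k:ℝ) := Nat.cast_nonneg k
      have hk2 : (0:ℝ) < 1/((k:ℝ)+2) := by positivity
      have hk2' : 1/((k:ℝ)+2) < 1 := by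
        rw [div_lt_one (by positivity)]; linarith
      obtain ⟨ε, hε0, hεle, hP⟩ := not_evSmall' (hcon k) hk2 hk2'
      push_neg at hP
      obtain ⟨x, hx, hlt⟩ := hP
      exact ⟨ε, hε0, hεle, x, hx, hlt⟩
    choose e he0 hele xpt hxmem hxbad using key
    have hehalf : ∀ k, e k ≤ 1/2 := by
      intro k
      refine (hele k).trans ?_
      rw [div_le_div_iff₀ (by positivity) (by norm_num)]
      have : (0:ℝ) ≤ (k:ℝ) := Nat.cast_nonneg k
      linarith
    -- nearby points in Aε (e k)
    have hy : ∀ k : ℕ, ∃ y ∈ Aε (e k), dist (xpt k) y < 2 * (e k) ^ (k:ℝ) := by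
      intro k
      have h1 : (0:ℝ) < (e k) ^ (k:ℝ) := Real.rpow_pos_of_pos (he0 k) _
      have hsub := Metric.cthickening_subset_thickening' (δ₂ := 2 * (e k) ^ (k:ℝ))
        (by linarith) (by linarith) (Aε (e k))
      exact Metric.mem_thickening_iff.1 (hsub (hxmem k))
    choose ypt hymem hyd using hy
    -- a net eventually in Aε (from nonemptiness of A)
    obtain ⟨a0, ha0A⟩ := hne
    rw [hA] at ha0A
    obtain ⟨-, b, -, εb, hεb0, hεb1, hbmem⟩ := ha0A
    obtain ⟨M, εM, hεM0, hεM1, hMb⟩ := hbd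
    -- the interleaved nets
    set X : ℝ → EuclideanSpace ℝ (Fin d) :=
      fun ε => if h : ∃ k, e k = ε then xpt h.choose else b ε with hXdef
    set Y : ℝ → EuclideanSpace ℝ (Fin d) :=
      fun ε => if h : ∃ k, e k = ε then ypt h.choose else b ε with hYdef
    have hXeq : ∀ (ε : ℝ) (h : ∃ k, e k = ε), X ε = xpt h.choose := by
      intro ε h; simp only [hXdef]; exact dif_pos h
    have hYeq : ∀ (ε : ℝ) (h : ∃ k, e k = ε), Y ε = ypt h.choose := by
      intro ε h; simp only [hYdef]; exact dif_pos h
    have hXeq' : ∀ ε : ℝ, ¬(∃ k, e k = ε) → X ε = b ε := by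
      intro ε h; simp only [hXdef]; exact dif_neg h
    have hYeq' : ∀ ε : ℝ, ¬(∃ k, e k = ε) → Y ε = b ε := by
      intro ε h; simp only [hYdef]; exact dif_neg h
    -- below a suitable threshold, only large indices occur
    have hdel : ∀ m : ℕ, ∃ δ : ℝ, 0 < δ ∧ δ ≤ 1/2 ∧ ∀ k, e k ≤ δ → m ≤ k := by
      intro m
      induction m with
      | zero => exact ⟨1/2, by norm_num, le_refl _, fun k _ => Nat.zero_le k⟩
      | succ m ih =>
        obtain ⟨δ, hδ0, hδh, hδ⟩ := ih
        refine ⟨min δ (e m / 2), lt_min hδ0 (by have := he0 m; positivity),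
          (min_le_left _ _).trans hδh, ?_⟩
        intro k hk
        have h1 : m ≤ k := hδ k (hk.trans (min_le_left _ _))
        rcases lt_or_eq_of_le h1 with h | h
        · exact h
        · exfalso
          have h2 := hk.trans (min_le_right _ _)
          rw [← h] at h2
          have := he0 m
          linarith
    -- Y is eventually in Aε
    have hYA : EvSmall fun ε => Y ε ∈ Aε ε := by
      refine ⟨εb, hεb0, hεb1, fun ε h1 h2 => ?_⟩
      show Y ε ∈ Aε ε
      by_cases h : ∃ k, e k = ε
      · rw [hYeq ε h]
        have hm := hymem h.choose
        rw [h.choose_spec] at hm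
        exact hm
      · rw [hYeq' ε h]; exact hbmem ε h1 h2
    -- X and Y are equivalent
    have hclose : EqvNet X Y := by
      intro m
      obtain ⟨δ, hδ0, hδh, hδ⟩ := hdel (m+1)
      refine ⟨δ, hδ0, by linarith, fun ε h1 h2 => ?_⟩
      show ‖X ε - Y ε‖ ≤ ε ^ ((m : ℕ) : ℝ)
      have hεhalf : ε ≤ 1/2 := h2.trans hδh
      by_cases h : ∃ k, e k = ε
      · rw [hXeq ε h, hYeq ε h]
        have hek : e h.choose = ε := h.choose_spec
        have hmk : m + 1 ≤ h.choose := hδ _ (by rw [hek]; exact h2)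
        have hd := hyd h.choose
        rw [hek] at hd
        have e1 : ε ^ ((h.choose : ℕ):ℝ) ≤ ε ^ (m+1) := by
          rw [Real.rpow_natCast]
          exact pow_le_pow_of_le_one h1.le (by linarith) hmk
        have hp : (0:ℝ) < ε ^ m := pow_pos h1 m
        have e2 : (2:ℝ) * ε ^ (m+1) ≤ ε ^ m := by
          rw [pow_succ]; nlinarith
        have hnd : ‖xpt h.choose - ypt h.choose‖ = dist (xpt h.choose) (ypt h.choose) :=
          (dist_eq_norm _ _).symm
        rw [Real.rpow_natCast]
        calc ‖xpt h.choose - ypt h.choose‖ = dist (xpt h.choose) (ypt h.choose) := hnd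
          _ ≤ 2 * ε ^ ((h.choose : ℕ):ℝ) := hd.le
          _ ≤ 2 * ε ^ (m+1) := by linarith
          _ ≤ ε ^ m := e2
      · rw [hXeq' ε h, hYeq' ε h]
        simp only [sub_self, norm_zero]
        positivity
    -- Y is moderate
    have hYmod : Moderate Y := by
      refine ⟨M, ?_⟩
      refine evsmall_mono' (evsmall_and' hYA ⟨εM, hεM0, hεM1, hMb⟩) ?_
      rintro ε h0 h1 ⟨hmem, hb⟩
      exact hb _ hmem
    -- X is moderate
    have hXmod : Moderate X := by
      obtain ⟨M', εY, hεY0, hεY1, hYb⟩ := hYmod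
      refine ⟨M' + 1, ?_⟩
      refine evsmall_mono' (evsmall_and' (evsmall_and' ⟨εY, hεY0, hεY1, hYb⟩ (hclose 0))
        (evsmall_le' (by norm_num : (0:ℝ) < 1/2))) ?_
      rintro ε h0 h1 ⟨⟨hYb', hXY⟩, hhalf⟩
      show ‖X ε‖ ≤ ε ^ (-((M' + 1 : ℕ) : ℝ))
      have hYb2 : ‖Y ε‖ ≤ ε ^ (-(M' : ℝ)) := hYb'
      have hXY2 : ‖X ε - Y ε‖ ≤ ε ^ (((0:ℕ)) : ℝ) := hXY
      have htri : ‖X ε‖ ≤ ‖X ε - Y ε‖ + ‖Y ε‖ := by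
        calc ‖X ε‖ = ‖(X ε - Y ε) + Y ε‖ := by rw [sub_add_cancel]
          _ ≤ ‖X ε - Y ε‖ + ‖Y ε‖ := norm_add_le _ _
      have h00 : ε ^ (((0:ℕ)):ℝ) = 1 := by norm_num
      rw [h00] at hXY2
      have hM' : ε ^ (-(M' : ℝ)) = (ε ^ M')⁻¹ := by
        rw [Real.rpow_neg h0.le, Real.rpow_natCast]
      have hM1 : ε ^ (-((M' + 1 : ℕ) : ℝ)) = (ε ^ (M' + 1))⁻¹ := by
        rw [Real.rpow_neg h0.le, Real.rpow_natCast]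
      rw [hM'] at hYb2
      rw [hM1]
      have := pow_inv_succ' h0 hhalf M'
      linarith
    -- Y belongs to A, X is a representative of a point of A
    have hYinA : Y ∈ A := by
      rw [hA]
      refine ⟨hYmod, Y, fun m => ⟨1/2, by norm_num, by norm_num, fun ε h1 h2 => ?_⟩, hYA⟩
      show ‖Y ε - Y ε‖ ≤ ε ^ ((m : ℕ) : ℝ)
      simp only [sub_self, norm_zero]
      positivity
    have hXrep : IsReprOfPointOf A X := ⟨hXmod, Y, hYinA, hclose⟩
    -- moderateness of the derivatives along X gives a contradiction
    obtain ⟨N₀, ε₂, hε₂0, hε₂1, hD⟩ := hmod n X hXrep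
    obtain ⟨δ, hδ0, hδh, hδ⟩ := hdel (N₀ + 1)
    set c := min ε₂ δ with hcdef
    have hc0 : 0 < c := lt_min hε₂0 hδ0
    obtain ⟨k, hk⟩ := exists_nat_gt (1/c)
    have hkc : 1/((k:ℝ)+2) ≤ c := by
      rw [div_le_iff₀ (by positivity)]
      have h1c : 1/c < (k:ℝ) + 2 := by
        have : (0:ℝ) ≤ (k:ℝ) := Nat.cast_nonneg k
        linarith
      have h1c' : (1/c) * c < ((k:ℝ) + 2) * c := by
        exact mul_lt_mul_of_pos_right h1c hc0
      rw [div_mul_cancel₀ 1 (ne_of_gt hc0)] at h1c'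
      linarith [h1c']
    have hε0' : 0 < e k := he0 k
    have hεc : e k ≤ c := (hele k).trans hkc
    have hεδ : e k ≤ δ := hεc.trans (min_le_right _ _)
    have hεε₂ : e k ≤ ε₂ := hεc.trans (min_le_left _ _)
    have h : ∃ j, e j = e k := ⟨k, rfl⟩
    have hDb : ‖iteratedFDeriv ℝ n (u (e k)) (X (e k))‖ ≤ (e k) ^ (-(N₀ : ℝ)) :=
      hD (e k) hε0' hεε₂
    rw [hXeq (e k) h] at hDb
    have hk'ε : e h.choose = e k := h.choose_spec
    have hk'N : N₀ + 1 ≤ h.choose := hδ h.choose (by rw [hk'ε]; exact hεδ)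
    have hb := hxbad h.choose
    rw [hk'ε] at hb
    have hεle1 : e k ≤ 1 := (hehalf k).trans (by norm_num)
    have hmono : (e k) ^ (-(N₀:ℝ)) ≤ (e k) ^ (-((h.choose : ℕ):ℝ)) := by
      apply Real.rpow_le_rpow_of_exponent_ge hε0' hεle1
      have : (N₀:ℝ) ≤ (h.choose : ℝ) := by exact_mod_cast le_of_lt (Nat.lt_of_lt_of_le (Nat.lt_succ_self N₀) hk'N)
      linarith
    linarith
  · intro hyp
    refine ⟨hsm, fun n x hx => ?_⟩
    obtain ⟨hxm, a, haA, hxa⟩ := hx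
    rw [hA] at haA
    obtain ⟨-, y, hay, hyA⟩ := haA
    obtain ⟨N, hN⟩ := hyp n
    refine ⟨N, ?_⟩
    have h1 := hxa (N+1)
    have h2 := hay (N+1)
    refine evsmall_mono' (evsmall_and' (evsmall_and' h1 h2)
      (evsmall_and' (evsmall_and' hyA hN) (evsmall_le' (by norm_num : (0:ℝ) < 1/2)))) ?_
    rintro ε h0 hlt1 ⟨⟨e1, e2⟩, ⟨hy', hNb⟩, hε2⟩
    show ‖iteratedFDeriv ℝ n (u ε) (x ε)‖ ≤ ε ^ (-(N : ℝ))
    have e1' : ‖x ε - a ε‖ ≤ ε ^ ((N+1 : ℕ) : ℝ) := e1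
    have e2' : ‖a ε - y ε‖ ≤ ε ^ ((N+1 : ℕ) : ℝ) := e2
    have hy2 : y ε ∈ Aε ε := hy'
    have hNb2 : ∀ z ∈ Metric.cthickening (ε ^ (N : ℝ)) (Aε ε),
        ‖iteratedFDeriv ℝ n (u ε) z‖ ≤ ε ^ (-(N : ℝ)) := hNb
    have hd : dist (x ε) (y ε) ≤ ε ^ ((N:ℕ):ℝ) := by
      have hsplit : x ε - y ε = (x ε - a ε) + (a ε - y ε) := by abel
      rw [dist_eq_norm, hsplit]
      have htri := norm_add_le (x ε - a ε) (a ε - y ε)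
      have hpow : ε ^ (((N+1:ℕ)):ℝ) + ε ^ ((N+1:ℕ):ℝ) ≤ ε ^ ((N:ℕ):ℝ) := by
        rw [Real.rpow_natCast, Real.rpow_natCast, pow_succ]
        have hp : (0:ℝ) < ε ^ N := pow_pos h0 N
        nlinarith
      linarith
    exact hNb2 (x ε) (Metric.mem_cthickening_of_dist_le (x ε) (y ε) _ _ hy2 hd)


end
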